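/- (Conservation laws for the α-point-vortex system) Let α ≥ 0, let a_1, …, a_N be nonzero reals, let (x_1, …, x_N) be a solution of the α-point-vortex system on [0,T), and let K : (0,∞) → ℝ be a differentiable function with K'(r) = r^{−α} for all r > 0. Then the three functions H(t) := (1/2) ∑_{i ≠ j} a_i a_j K(|x_i(t) − x_j(t)|), M(t) := ∑_{i=1}^N a_i x_i(t), and I(t) := ∑_{i=1}^N a_i |x_i(t)|² are constant on [0,T). -/

import Mathlib

open Finset

/-- Swap the indices in an off-diagonal double sum. -/
lemma pv_swap_sum {N : ℕ} {M : Type*} [AddCommMonoid M] (f g : Fin N → Fin N → M)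
    (hfg : ∀ i j, j ≠ i → f i j = g j i) :
    ∑ i, ∑ j ∈ Finset.univ.filter (fun j => j ≠ i), f i j
      = ∑ i, ∑ j ∈ Finset.univ.filter (fun j => j ≠ i), g i j := by
  simp only [Finset.sum_filter]
  rw [Finset.sum_comm]
  refine Finset.sum_congr rfl fun i _ => Finset.sum_congr rfl fun j _ => ?_
  by_cases h : j ≠ i
  · rw [if_pos (Ne.symm h), if_pos h, hfg j i (Ne.symm h)]
  · rw [if_neg (fun hh => h (Ne.symm hh)), if_neg h]

/-- An antisymmetric off-diagonal double sum vanishes. -/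
lemma pv_antisymm_sum_zero {N : ℕ} {M : Type*} [AddCommGroup M] [Module ℝ M]
    (f : Fin N → Fin N → M) (hf : ∀ i j, j ≠ i → f j i = - f i j) :
    ∑ i, ∑ j ∈ Finset.univ.filter (fun j => j ≠ i), f i j = 0 := by
  have h := pv_swap_sum f (fun i j => - f i j) (fun i j hji => by
    show f i j = - f j i
    rw [hf i j hji, neg_neg])
  have hneg : ∑ i, ∑ j ∈ Finset.univ.filter (fun j => j ≠ i), (fun i j => - f i j) i j
      = -∑ i, ∑ j ∈ Finset.univ.filter (fun j => j ≠ i), f i j := by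
    simp
  set S := ∑ i, ∑ j ∈ Finset.univ.filter (fun j => j ≠ i), f i j with hS
  have h2 : S = -S := h.trans hneg
  have : (2:ℝ) • S = 0 := by
    rw [two_smul]; nth_rewrite 1 [h2]; exact neg_add_cancel S
  have := smul_eq_zero.mp this
  rcases this with h' | h'
  · norm_num at h'
  · exact h'

/-- derivative of `‖z‖²`. -/
lemma pv_hasDeriv_normSq {z : ℝ → ℂ} {v : ℂ} {s : Set ℝ} {t : ℝ}
    (hz : HasDerivWithinAt z v s t) :
    HasDerivWithinAt (fun u => ‖z u‖ ^ 2)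
      (2 * ((z t).re * v.re + (z t).im * v.im)) s t := by
  have hre : HasDerivWithinAt (fun u => (z u).re) v.re s t :=
    (Complex.reCLM.hasFDerivAt (x := z t)).comp_hasDerivWithinAt t hz
  have him : HasDerivWithinAt (fun u => (z u).im) v.im s t :=
    (Complex.imCLM.hasFDerivAt (x := z t)).comp_hasDerivWithinAt t hz
  have heq : (fun u => ‖z u‖ ^ 2) = fun u => (z u).re * (z u).re + (z u).im * (z u).im := by
    funext u
    rw [Complex.sq_norm, Complex.normSq_apply]
  rw [heq]
  have := (hre.fun_mul hre).fun_add (him.fun_mul him)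
  exact this.congr_deriv (by ring)

/-- derivative of `‖z‖`. -/
lemma pv_hasDeriv_norm {z : ℝ → ℂ} {v : ℂ} {s : Set ℝ} {t : ℝ}
    (hz : HasDerivWithinAt z v s t) (h0 : z t ≠ 0) :
    HasDerivWithinAt (fun u => ‖z u‖)
      (((z t).re * v.re + (z t).im * v.im) / ‖z t‖) s t := by
  have heq : (fun u => ‖z u‖) = fun u => Real.sqrt (‖z u‖ ^ 2) := by
    funext u; rw [Real.sqrt_sq (norm_nonneg _)]
  have hpos : (0:ℝ) < ‖z t‖ := norm_pos_iff.mpr h0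
  have h2 : ‖z t‖ ^ 2 ≠ 0 := by positivity
  rw [heq]
  have := (pv_hasDeriv_normSq hz).sqrt h2
  convert this using 1
  rw [Real.sqrt_sq (norm_nonneg _)]
  field_simp

/-- A function with zero derivative within `[0,T)` is constant there. -/
lemma pv_const_of_deriv0 {E : Type*} [NormedAddCommGroup E] [NormedSpace ℝ E]
    {T : ℝ} (hT : 0 < T) (f : ℝ → E)
    (hf : ∀ t ∈ Set.Ico (0:ℝ) T, HasDerivWithinAt f 0 (Set.Ico (0:ℝ) T) t) :
    ∀ t ∈ Set.Ico (0:ℝ) T, f t = f 0 := by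
  intro t ht
  refine (convex_Ico (0:ℝ) T).is_const_of_fderivWithin_eq_zero
    (fun u hu => (hf u hu).differentiableWithinAt) (fun u hu => ?_) ht ⟨le_refl 0, hT⟩
  have h := (hf u hu).hasFDerivWithinAt.fderivWithin ((uniqueDiffOn_Ico 0 T) u hu)
  rw [h]
  ext
  simp

/-- **Conservation laws for the α-point-vortex system.**
Identifying `ℝ²` with `ℂ` (so `v^⊥ = I * v`), let `(x₁,…,x_N)` be a solution of the
`α`-point-vortex system on `[0,T)` and let `K : (0,∞) → ℝ` be differentiable with
`K'(r) = r^{−α}`. Then the Hamiltonian `H(t) = ½ ∑_{i≠j} a_i a_j K(‖x_i(t)−x_j(t)‖)`,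
the vorticity vector `M(t) = ∑ a_i x_i(t)` and the vorticity momentum
`I(t) = ∑ a_i ‖x_i(t)‖²` are constant on `[0,T)`. -/
theorem alpha_point_vortex_conservation (N : ℕ) (α : ℝ) (hα : 0 ≤ α)
    (a : Fin N → ℝ) (ha : ∀ i, a i ≠ 0) (T : ℝ) (hT : 0 < T)
    (x : Fin N → ℝ → ℂ)
    (hsep : ∀ i j, i ≠ j → ∀ t ∈ Set.Ico (0:ℝ) T, x i t ≠ x j t)
    (hode : ∀ i, ∀ t ∈ Set.Ico (0:ℝ) T,
      HasDerivWithinAt (x i)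
        (∑ j ∈ Finset.univ.filter (fun j => j ≠ i),
          (a j / ‖x i t - x j t‖ ^ (α + 1)) • (Complex.I * (x i t - x j t)))
        (Set.Ico (0:ℝ) T) t)
    (K : ℝ → ℝ) (hK : ∀ r : ℝ, 0 < r → HasDerivAt K (r ^ (-α)) r) :
    (∀ t ∈ Set.Ico (0:ℝ) T,
      (1 / 2) * ∑ i, ∑ j ∈ Finset.univ.filter (fun j => j ≠ i),
          a i * a j * K ‖x i t - x j t‖
        = (1 / 2) * ∑ i, ∑ j ∈ Finset.univ.filter (fun j => j ≠ i),
            a i * a j * K ‖x i 0 - x j 0‖) ∧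
    (∀ t ∈ Set.Ico (0:ℝ) T, (∑ i, a i • x i t) = ∑ i, a i • x i 0) ∧
    (∀ t ∈ Set.Ico (0:ℝ) T, (∑ i, a i * ‖x i t‖ ^ 2) = ∑ i, a i * ‖x i 0‖ ^ 2) := by
  refine ⟨?_, ?_, ?_⟩
  · -- Hamiltonian H
    intro t ht
    refine pv_const_of_deriv0 hT (fun u => (1 / 2) * ∑ i, ∑ j ∈ Finset.univ.filter (fun j => j ≠ i),
        a i * a j * K ‖x i u - x j u‖) ?_ t ht
    intro u hu
    -- velocities
    set v : Fin N → ℂ := fun i => ∑ j ∈ Finset.univ.filter (fun j => j ≠ i),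
        (a j / ‖x i u - x j u‖ ^ (α + 1)) • (Complex.I * (x i u - x j u)) with hv
    have hode' : ∀ i, HasDerivWithinAt (x i) (v i) (Set.Ico (0:ℝ) T) u := fun i => hode i u hu
    have hne : ∀ i j : Fin N, j ≠ i → x i u - x j u ≠ 0 := fun i j hji =>
      sub_ne_zero.mpr (hsep i j (Ne.symm hji) u hu)
    have hnpos : ∀ i j : Fin N, j ≠ i → (0:ℝ) < ‖x i u - x j u‖ := fun i j hji =>
      norm_pos_iff.mpr (hne i j hji)
    have h1 : HasDerivWithinAt (fun w => (1 / 2) * ∑ i, ∑ j ∈ Finset.univ.filter (fun j => j ≠ i),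
          a i * a j * K ‖x i w - x j w‖)
        ((1 / 2) * ∑ i, ∑ j ∈ Finset.univ.filter (fun j => j ≠ i),
          a i * a j * (‖x i u - x j u‖ ^ (-α) *
            (((x i u - x j u).re * (v i - v j).re + (x i u - x j u).im * (v i - v j).im)
              / ‖x i u - x j u‖)))
        (Set.Ico (0:ℝ) T) u := by
      refine HasDerivWithinAt.const_mul (1/2 : ℝ) (HasDerivWithinAt.fun_sum fun i _ =>
        HasDerivWithinAt.fun_sum fun j hj => ?_)
      have hji : j ≠ i := (Finset.mem_filter.mp hj).2
      exact ((hK _ (hnpos i j hji)).comp_hasDerivWithinAt u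
        (pv_hasDeriv_norm ((hode' i).sub (hode' j)) (hne i j hji))).const_mul (a i * a j)
    -- the value is zero
    have hzero : ((1 / 2 : ℝ) * ∑ i, ∑ j ∈ Finset.univ.filter (fun j => j ≠ i),
          a i * a j * (‖x i u - x j u‖ ^ (-α) *
            (((x i u - x j u).re * (v i - v j).re + (x i u - x j u).im * (v i - v j).im)
              / ‖x i u - x j u‖))) = 0 := by
      -- abbreviations
      set G : Fin N → Fin N → ℝ := fun i j => a i * a j * (‖x i u - x j u‖ ^ (-α) *
          (((x i u - x j u).re * (v i).re + (x i u - x j u).im * (v i).im)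
            / ‖x i u - x j u‖)) with hG
      set F : Fin N → Fin N → ℝ := fun i j => a i * a j * (‖x i u - x j u‖ ^ (-α) *
          (((x i u - x j u).re * (v j).re + (x i u - x j u).im * (v j).im)
            / ‖x i u - x j u‖)) with hF
      -- ∑∑ G = 0
      have hGzero : ∑ i, ∑ j ∈ Finset.univ.filter (fun j => j ≠ i), G i j = 0 := by
        refine Finset.sum_eq_zero fun i _ => ?_
        -- rewrite v i as I * W
        set W : ℂ := ∑ j ∈ Finset.univ.filter (fun j => j ≠ i),
            (a j / ‖x i u - x j u‖ ^ (α + 1)) • (x i u - x j u) with hW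
        have hvW : v i = Complex.I * W := by
          rw [hv, hW, Finset.mul_sum]
          exact Finset.sum_congr rfl fun j _ => (mul_smul_comm _ _ _).symm
        have hWre : W.re = ∑ j ∈ Finset.univ.filter (fun j => j ≠ i),
            (a j / ‖x i u - x j u‖ ^ (α + 1)) * (x i u - x j u).re := by
          rw [hW, Complex.re_sum]
          exact Finset.sum_congr rfl fun j _ => by rw [Complex.smul_re, smul_eq_mul]
        have hWim : W.im = ∑ j ∈ Finset.univ.filter (fun j => j ≠ i),
            (a j / ‖x i u - x j u‖ ^ (α + 1)) * (x i u - x j u).im := by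
          rw [hW, Complex.im_sum]
          exact Finset.sum_congr rfl fun j _ => by rw [Complex.smul_im, smul_eq_mul]
        have hstep : ∀ j ∈ Finset.univ.filter (fun j => j ≠ i), G i j
            = a i * (((a j / ‖x i u - x j u‖ ^ (α + 1)) * (x i u - x j u).re)
                  * (Complex.I * W).re
                + ((a j / ‖x i u - x j u‖ ^ (α + 1)) * (x i u - x j u).im)
                  * (Complex.I * W).im) := by
          intro j hj
          have hji : j ≠ i := (Finset.mem_filter.mp hj).2
          have hp := hnpos i j hji
          have hrp : (0:ℝ) < ‖x i u - x j u‖ ^ (α + 1) := Real.rpow_pos_of_pos hp _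
          have hr : ‖x i u - x j u‖ ^ (α + 1) * ‖x i u - x j u‖ ^ (-α) = ‖x i u - x j u‖ := by
            rw [← Real.rpow_add hp]
            norm_num
          have hsc : ‖x i u - x j u‖ ^ (-α) / ‖x i u - x j u‖
              = 1 / ‖x i u - x j u‖ ^ (α + 1) := by
            rw [div_eq_div_iff hp.ne' hrp.ne', one_mul, mul_comm]
            exact hr
          simp only [hG]
          rw [hvW]
          calc a i * a j * (‖x i u - x j u‖ ^ (-α) * (((x i u - x j u).re * (Complex.I * W).re
                  + (x i u - x j u).im * (Complex.I * W).im) / ‖x i u - x j u‖))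
              = a i * a j * ((‖x i u - x j u‖ ^ (-α) / ‖x i u - x j u‖)
                  * ((x i u - x j u).re * (Complex.I * W).re
                    + (x i u - x j u).im * (Complex.I * W).im)) := by ring
            _ = a i * a j * ((1 / ‖x i u - x j u‖ ^ (α + 1))
                  * ((x i u - x j u).re * (Complex.I * W).re
                    + (x i u - x j u).im * (Complex.I * W).im)) := by rw [hsc]
            _ = a i * (a j / ‖x i u - x j u‖ ^ (α + 1) * (x i u - x j u).re
                    * (Complex.I * W).re
                  + a j / ‖x i u - x j u‖ ^ (α + 1) * (x i u - x j u).im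
                    * (Complex.I * W).im) := by ring
        rw [Finset.sum_congr rfl hstep, ← Finset.mul_sum]
        have : ∑ j ∈ Finset.univ.filter (fun j => j ≠ i),
            (((a j / ‖x i u - x j u‖ ^ (α + 1)) * (x i u - x j u).re) * (Complex.I * W).re
              + ((a j / ‖x i u - x j u‖ ^ (α + 1)) * (x i u - x j u).im) * (Complex.I * W).im)
            = W.re * (Complex.I * W).re + W.im * (Complex.I * W).im := by
          rw [Finset.sum_add_distrib, ← Finset.sum_mul, ← Finset.sum_mul, ← hWre, ← hWim]
        rw [this]
        simp only [Complex.mul_re, Complex.mul_im, Complex.I_re, Complex.I_im]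
        ring
      -- ∑∑ F = -∑∑ G
      have hFG : ∑ i, ∑ j ∈ Finset.univ.filter (fun j => j ≠ i), F i j
          = -∑ i, ∑ j ∈ Finset.univ.filter (fun j => j ≠ i), G i j := by
        have hswap := pv_swap_sum F (fun i j => -G i j) (fun i j hji => by
          show F i j = -G j i
          simp only [hF, hG]
          rw [norm_sub_rev (x j u) (x i u)]
          simp only [Complex.sub_re, Complex.sub_im]
          ring)
        rw [hswap]
        simp
      -- combine
      have hcomb : ∀ i, ∀ j ∈ Finset.univ.filter (fun j => j ≠ i),
          a i * a j * (‖x i u - x j u‖ ^ (-α) *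
            (((x i u - x j u).re * (v i - v j).re + (x i u - x j u).im * (v i - v j).im)
              / ‖x i u - x j u‖)) = G i j - F i j := by
        intro i j _
        simp only [hG, hF]
        simp only [Complex.sub_re, Complex.sub_im]
        ring
      rw [Finset.sum_congr rfl (fun i _ => Finset.sum_congr rfl (hcomb i)),
        Finset.sum_congr rfl (fun i (_ : i ∈ Finset.univ) => Finset.sum_sub_distrib _ _),
        Finset.sum_sub_distrib, hFG, hGzero]
      ring
    rw [hzero] at h1
    exact h1
  · -- momentum M
    intro t ht
    refine pv_const_of_deriv0 hT (fun u => ∑ i, a i • x i u) ?_ t ht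
    intro u hu
    have h1 : HasDerivWithinAt (fun w => ∑ i, a i • x i w)
        (∑ i, a i • (∑ j ∈ Finset.univ.filter (fun j => j ≠ i),
          (a j / ‖x i u - x j u‖ ^ (α + 1)) • (Complex.I * (x i u - x j u))))
        (Set.Ico (0:ℝ) T) u :=
      HasDerivWithinAt.fun_sum (fun i _ => (hode i u hu).const_smul (a i))
    have h2 : (∑ i, a i • (∑ j ∈ Finset.univ.filter (fun j => j ≠ i),
          (a j / ‖x i u - x j u‖ ^ (α + 1)) • (Complex.I * (x i u - x j u)))) = 0 := by
      simp only [Finset.smul_sum, smul_smul]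
      refine pv_antisymm_sum_zero
        (fun i j => (a i * (a j / ‖x i u - x j u‖ ^ (α + 1))) • (Complex.I * (x i u - x j u)))
        (fun i j hji => ?_)
      show (a j * (a i / ‖x j u - x i u‖ ^ (α + 1))) • (Complex.I * (x j u - x i u))
        = -((a i * (a j / ‖x i u - x j u‖ ^ (α + 1))) • (Complex.I * (x i u - x j u)))
      rw [norm_sub_rev (x j u) (x i u)]
      simp only [Complex.real_smul]
      push_cast
      ring
    rw [h2] at h1
    exact h1
  · -- moment of inertia I
    intro t ht
    refine pv_const_of_deriv0 hT (fun u => ∑ i, a i * ‖x i u‖ ^ 2) ?_ t ht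
    intro u hu
    have h1 : HasDerivWithinAt (fun w => ∑ i, a i * ‖x i w‖ ^ 2)
        (∑ i, a i * (2 * ((x i u).re * (∑ j ∈ Finset.univ.filter (fun j => j ≠ i),
            (a j / ‖x i u - x j u‖ ^ (α + 1)) • (Complex.I * (x i u - x j u))).re
          + (x i u).im * (∑ j ∈ Finset.univ.filter (fun j => j ≠ i),
            (a j / ‖x i u - x j u‖ ^ (α + 1)) • (Complex.I * (x i u - x j u))).im)))
        (Set.Ico (0:ℝ) T) u :=
      HasDerivWithinAt.fun_sum (fun i _ => (pv_hasDeriv_normSq (hode i u hu)).const_mul (a i))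
    have h2 : (∑ i, a i * (2 * ((x i u).re * (∑ j ∈ Finset.univ.filter (fun j => j ≠ i),
            (a j / ‖x i u - x j u‖ ^ (α + 1)) • (Complex.I * (x i u - x j u))).re
          + (x i u).im * (∑ j ∈ Finset.univ.filter (fun j => j ≠ i),
            (a j / ‖x i u - x j u‖ ^ (α + 1)) • (Complex.I * (x i u - x j u))).im))) = 0 := by
      have hstep : ∀ i, a i * (2 * ((x i u).re * (∑ j ∈ Finset.univ.filter (fun j => j ≠ i),
            (a j / ‖x i u - x j u‖ ^ (α + 1)) • (Complex.I * (x i u - x j u))).re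
          + (x i u).im * (∑ j ∈ Finset.univ.filter (fun j => j ≠ i),
            (a j / ‖x i u - x j u‖ ^ (α + 1)) • (Complex.I * (x i u - x j u))).im))
          = ∑ j ∈ Finset.univ.filter (fun j => j ≠ i),
              (a i * (a j / ‖x i u - x j u‖ ^ (α + 1)))
              * (2 * ((x i u).re * (Complex.I * (x i u - x j u)).re
                  + (x i u).im * (Complex.I * (x i u - x j u)).im)) := by
        intro i
        rw [Complex.re_sum, Complex.im_sum]
        simp only [Complex.smul_re, Complex.smul_im, smul_eq_mul]
        simp only [Finset.mul_sum, mul_add, ← Finset.sum_add_distrib]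
        exact Finset.sum_congr rfl fun j _ => by ring
      rw [Finset.sum_congr rfl (fun i _ => hstep i)]
      refine pv_antisymm_sum_zero
        (fun i j => (a i * (a j / ‖x i u - x j u‖ ^ (α + 1)))
          * (2 * ((x i u).re * (Complex.I * (x i u - x j u)).re
              + (x i u).im * (Complex.I * (x i u - x j u)).im)))
        (fun i j hji => ?_)
      show (a j * (a i / ‖x j u - x i u‖ ^ (α + 1)))
          * (2 * ((x j u).re * (Complex.I * (x j u - x i u)).re
              + (x j u).im * (Complex.I * (x j u - x i u)).im))
        = -((a i * (a j / ‖x i u - x j u‖ ^ (α + 1)))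
          * (2 * ((x i u).re * (Complex.I * (x i u - x j u)).re
              + (x i u).im * (Complex.I * (x i u - x j u)).im)))
      rw [norm_sub_rev (x j u) (x i u)]
      simp only [Complex.mul_re, Complex.mul_im, Complex.I_re, Complex.I_im,
        Complex.sub_re, Complex.sub_im]
      ring
    rw [h2] at h1
    exact h1
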